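/- Let λ be a root of unity of algebraic degree 4 over ℚ satisfying λ² − aλ − b = 0 with b = 1 and a an element of an imaginary quadratic field ℚ(√D) (D a negative integer). Then a ∈ {√(−1), −√(−1), √(−2), −√(−2)}. -/

import Mathlib

open Polynomial in
lemma deg_contra (lam : ℂ) (hdeg : (minpoly ℚ lam).natDegree = 4) (c d : ℚ)
    (h : lam ^ 2 + (c : ℂ) * lam + (d : ℂ) = 0) : False := by
  have hp : (Polynomial.aeval lam) (X ^ 2 + C c * X + C d) = 0 := by
    simp only [map_add, map_mul, map_pow, aeval_X, aeval_C, eq_ratCast]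
    linear_combination h
  have hdvd := minpoly.dvd ℚ lam hp
  have hdn : (X ^ 2 + C c * X + C d : ℚ[X]).natDegree = 2 := by compute_degree!
  have hne : (X ^ 2 + C c * X + C d : ℚ[X]) ≠ 0 := by
    intro h0
    rw [h0] at hdn
    simp at hdn
  have := Polynomial.natDegree_le_of_dvd hdvd hne
  omega

/-- A root of unity `λ` of degree 4 over ℚ with `λ² − aλ − 1 = 0` and
`a ∈ ℚ(√D)` (D a negative integer) forces `a ∈ {±√(−1), ±√(−2)}`. -/
theorem stmt_1 (D : ℤ) (hD : D < 0) (lam a : ℂ)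
    (hroot : ∃ n : ℕ, 0 < n ∧ lam ^ n = 1)
    (hdeg : (minpoly ℚ lam).natDegree = 4)
    (ha : ∃ x y : ℚ, a = (x : ℂ) + (y : ℂ) * (Real.sqrt (-(D : ℝ)) * Complex.I))
    (heq : lam ^ 2 - a * lam - 1 = 0) :
    a = Complex.I ∨ a = -Complex.I ∨
      a = (Real.sqrt 2 : ℝ) * Complex.I ∨ a = -((Real.sqrt 2 : ℝ) * Complex.I) := by
  obtain ⟨n, hn, hln⟩ := hroot
  obtain ⟨x, y, hxy⟩ := ha
  set s : ℝ := Real.sqrt (-(D : ℝ)) with hs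
  have hs2 : s ^ 2 = -(D : ℝ) := Real.sq_sqrt (neg_nonneg.mpr (by exact_mod_cast hD.le))
  have hl0 : lam ≠ 0 := by
    intro h
    rw [h, zero_pow hn.ne'] at hln
    exact zero_ne_one hln
  have habs : ‖lam‖ = 1 := Complex.norm_eq_one_of_pow_eq_one hln hn.ne'
  -- a = lam - lam⁻¹
  have haf : a = lam - lam⁻¹ := by
    field_simp
    linear_combination -heq
  -- a is purely imaginary
  have hconj : (starRingEnd ℂ) a = -a := by
    rw [haf, map_sub, ← Complex.inv_eq_conj habs, map_inv₀, ← Complex.inv_eq_conj habs, inv_inv]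
    ring
  have hre : a.re = 0 := by
    have h1 := congrArg Complex.re hconj
    simp only [Complex.conj_re, Complex.neg_re] at h1
    linarith
  have hx0 : (x : ℝ) = 0 := by
    have : a.re = (x : ℝ) := by
      rw [hxy]
      simp [Complex.add_re, Complex.mul_re]
    linarith [this ▸ hre]
  -- a = r * I with r = y * s
  set r : ℝ := (y : ℝ) * s with hr
  have hx0' : (x : ℂ) = 0 := by exact_mod_cast hx0
  have har : a = (r : ℂ) * Complex.I := by
    rw [hxy, hx0', hr]
    push_cast
    ring
  -- a ^ 2 = y² D, rational
  have hr2 : -(r ^ 2) = (y : ℝ) ^ 2 * (D : ℝ) := by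
    rw [hr, mul_pow, hs2]; ring
  have ha2 : a ^ 2 = ((y ^ 2 * (D : ℚ) : ℚ) : ℂ) := by
    have h1 : a ^ 2 = ((-(r ^ 2) : ℝ) : ℂ) := by
      rw [har, mul_pow, Complex.I_sq]; push_cast; ring
    rw [h1, hr2]
    push_cast
    ring
  -- t = lam² + (lam²)⁻¹ = a² + 2
  have ht : lam ^ 2 + (lam ^ 2)⁻¹ = a ^ 2 + 2 := by
    field_simp
    linear_combination (lam ^ 2 + a * lam - 1) * heq
  -- (lam²)⁻¹ as a power of lam
  have hinv : (lam ^ 2)⁻¹ = lam ^ (2 * (n - 1)) := by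
    have h1 : lam ^ (2 * (n - 1)) * lam ^ 2 = 1 := by
      rw [← pow_add]
      have h2 : 2 * (n - 1) + 2 = 2 * n := by omega
      rw [h2, mul_comm 2 n, pow_mul, hln, one_pow]
    exact (eq_inv_of_mul_eq_one_left h1).symm
  -- lam is integral over ℤ
  have hint : IsIntegral ℤ lam := by
    refine ⟨Polynomial.X ^ n - Polynomial.C 1, Polynomial.monic_X_pow_sub_C 1 hn.ne', ?_⟩
    simp [Polynomial.eval₂_sub, hln]
  set q : ℚ := y ^ 2 * (D : ℚ) + 2 with hq
  have htq : lam ^ 2 + (lam ^ 2)⁻¹ = ((q : ℚ) : ℂ) := by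
    rw [ht, ha2, hq]; push_cast; ring
  have hintq : IsIntegral ℤ ((q : ℚ) : ℂ) := by
    rw [← htq, hinv]
    exact (hint.pow 2).add (hint.pow _)
  have hintq' : IsIntegral ℤ q := by
    have := (isIntegral_algHom_iff ((algebraMap ℚ ℂ).toIntAlgHom)
      (algebraMap ℚ ℂ).injective (x := q)).mp ?_
    · exact this
    · have : ((algebraMap ℚ ℂ).toIntAlgHom q) = ((q : ℚ) : ℂ) := by
        simp [RingHom.toIntAlgHom_coe, eq_ratCast]
      rw [this]; exact hintq
  obtain ⟨m, hm⟩ := IsIntegrallyClosed.isIntegral_iff.mp hintq'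
  have hm' : (m : ℚ) = q := by rwa [eq_intCast] at hm  -- check
  -- bound |m| ≤ 2
  have habs2 : ‖lam ^ 2 + (lam ^ 2)⁻¹‖ ≤ 2 := by
    calc ‖lam ^ 2 + (lam ^ 2)⁻¹‖
        ≤ ‖lam ^ 2‖ + ‖(lam ^ 2)⁻¹‖ := norm_add_le _ _
      _ = 2 := by rw [norm_inv, norm_pow, habs]; norm_num
  have hmb : -2 ≤ m ∧ m ≤ 2 := by
    rw [htq] at habs2
    have : |(q : ℝ)| ≤ 2 := by
      have : ‖((q : ℚ) : ℂ)‖ = |(q : ℝ)| := by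
        rw [show ((q : ℚ) : ℂ) = (((q : ℝ)) : ℂ) by push_cast; ring, Complex.norm_real, Real.norm_eq_abs]
      rw [this] at habs2; exact habs2
    have hq' : |(m : ℝ)| ≤ 2 := by
      rw [show ((m : ℝ)) = ((q : ℝ)) by exact_mod_cast congrArg (fun t : ℚ => (t : ℝ)) hm']
      exact this
    constructor <;> [exact_mod_cast neg_le_of_abs_le hq'; exact_mod_cast le_of_abs_le hq']
  -- a² = m - 2
  have ham : a ^ 2 = (m : ℂ) - 2 := by
    rw [ha2]
    have : (y ^ 2 * (D : ℚ) : ℚ) = (m : ℚ) - 2 := by rw [hm']; ring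
    rw [this]; push_cast; ring
  -- quartic: lam⁴ - m·lam² + 1 = 0
  have hquart : lam ^ 4 - (m : ℂ) * lam ^ 2 + 1 = 0 := by
    linear_combination (lam ^ 2 + a * lam - 1) * heq + lam ^ 2 * ham
  obtain ⟨hmb1, hmb2⟩ := hmb
  interval_cases m
  · -- m = -2 : lam² = -1
    exfalso
    have h2 : (lam ^ 2 + 1) ^ 2 = 0 := by linear_combination hquart
    have h3 : lam ^ 2 + (0 : ℚ) * lam + (1 : ℚ) = 0 := by
      have := pow_eq_zero_iff (n := 2) (by norm_num) |>.mp h2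
      push_cast; linear_combination this
    exact deg_contra lam hdeg 0 1 h3
  · -- m = -1 : lam² ± lam + 1 = 0
    exfalso
    have h2 : (lam ^ 2 + lam + 1) * (lam ^ 2 - lam + 1) = 0 := by linear_combination hquart
    rcases mul_eq_zero.mp h2 with h3 | h3
    · exact deg_contra lam hdeg 1 1 (by push_cast; linear_combination h3)
    · exact deg_contra lam hdeg (-1) 1 (by push_cast; linear_combination h3)
  · -- m = 0 : a² = -2, a = ±√2 i
    have ha2' : a ^ 2 = -2 := by rw [ham]; norm_num
    have hr2' : r ^ 2 = 2 := by
      have h1 : a ^ 2 = ((-(r ^ 2) : ℝ) : ℂ) := by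
        rw [har, mul_pow, Complex.I_sq]; push_cast; ring
      rw [ha2'] at h1
      have : (-(r ^ 2) : ℝ) = -2 := by exact_mod_cast h1.symm
      linarith
    have hs2' : (Real.sqrt 2) ^ 2 = 2 := Real.sq_sqrt (by norm_num)
    have : (r - Real.sqrt 2) * (r + Real.sqrt 2) = 0 := by nlinarith
    rcases mul_eq_zero.mp this with h | h
    · right; right; left
      rw [har, show r = Real.sqrt 2 by linarith]
    · right; right; right
      rw [har, show r = -Real.sqrt 2 by linarith]
      push_cast; ring
  · -- m = 1 : a² = -1, a = ±i
    have ha2' : a ^ 2 = -1 := by rw [ham]; norm_num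
    have hr2' : r ^ 2 = 1 := by
      have h1 : a ^ 2 = ((-(r ^ 2) : ℝ) : ℂ) := by
        rw [har, mul_pow, Complex.I_sq]; push_cast; ring
      rw [ha2'] at h1
      have : (-(r ^ 2) : ℝ) = -1 := by exact_mod_cast h1.symm
      linarith
    have : (r - 1) * (r + 1) = 0 := by nlinarith
    rcases mul_eq_zero.mp this with h | h
    · left
      rw [har, show r = 1 by linarith]
      push_cast; ring
    · right; left
      rw [har, show r = -1 by linarith]
      push_cast; ring
  · -- m = 2 : lam² = 1
    exfalso
    have h2 : (lam ^ 2 - 1) ^ 2 = 0 := by linear_combination hquart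
    have h3 : lam ^ 2 + (0 : ℚ) * lam + (-1 : ℚ) = 0 := by
      have := pow_eq_zero_iff (n := 2) (by norm_num) |>.mp h2
      push_cast; linear_combination this
    exact deg_contra lam hdeg 0 (-1) h3
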